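/- Let S be a ⟨∨,0⟩-semilattice that does not satisfy the ⟨ω,ω⟩-interpolation property, i.e. there exist an increasing sequence (a_n)_{n<ω} and a decreasing sequence (b_n)_{n<ω} in S with a_m ≤ b_n for all m, n < ω, but no c ∈ S with a_m ≤ c ≤ b_n for all m, n < ω. Then there exists an S-valued measure μ on the partial lattice P_{ω,ω} that cannot be factored through a lattice: there exist no lattice L, no homomorphism of partial lattices f : P_{ω,ω} → L, and no S-valued measure ν on L with μ(x,y) = ν(f(x), f(y)) for all x, y ∈ P_{ω,ω}. -/

import Mathlib

open Set Cardinal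

/-- Membership in the Boolean subalgebra of the powerset of `P` generated by the
lower subsets of `P`: the smallest family of subsets of `P` containing all lower
sets and closed under complementation and (binary) union (hence also under binary
intersection, and containing `∅` and `P`). -/
inductive IntMem (P : Type*) [Preorder P] : Set P → Prop
  | lower (s : Set P) : IsLowerSet s → IntMem P s
  | compl (s : Set P) : IntMem P s → IntMem P sᶜ
  | union (s t : Set P) : IntMem P s → IntMem P t → IntMem P (s ∪ t)

/-- `Int P`: the Boolean subalgebra of the powerset of `P` generated by the lower subsets
of `P`, viewed as a set of subsets of `P`. -/
def IntP (P : Type*) [Preorder P] : Set (Set P) := {s | IntMem P s}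

open Classical in
/-- `χ_o` : sends a subset of `{β | β < o}` to `false` if it is bounded (contained in some
`α < o`) and to `true` otherwise. -/
noncomputable def chiO (o : Ordinal) (x : Set ↥(Set.Iio o)) : Bool :=
  if ∃ α < o, ∀ β ∈ x, (β : Ordinal) < α then false else true

/-- The ambient Boolean algebra `(Set κ) × (Set λ) × (Set λ)` in which
`A_{κ,λ} = Int κ × Int λ × Int λ` lives. -/
abbrev Amb (κ lam : Cardinal) : Type _ :=
  Set ↥(Set.Iio κ.ord) × Set ↥(Set.Iio lam.ord) × Set ↥(Set.Iio lam.ord)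

/-- `A_{κ,λ} = Int κ × Int λ × Int λ`. -/
def ASet (κ lam : Cardinal) : Set (Amb κ lam) :=
  {p | p.1 ∈ IntP ↥(Set.Iio κ.ord) ∧ p.2.1 ∈ IntP ↥(Set.Iio lam.ord) ∧
       p.2.2 ∈ IntP ↥(Set.Iio lam.ord)}

/-- `U_{κ,λ} = {⟨x0,x1,x2⟩ ∈ A_{κ,λ} : χ_κ(x0) = χ_λ(x1) = χ_λ(x2)}`. -/
def USet (κ lam : Cardinal) : Set (Amb κ lam) :=
  {p ∈ ASet κ lam | chiO κ.ord p.1 = chiO lam.ord p.2.1 ∧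
    chiO lam.ord p.2.1 = chiO lam.ord p.2.2}

/-- `V_{κ,λ} = {⟨x0,x1,x2⟩ ∈ A_{κ,λ} : χ_κ(x0) = χ_λ(x1)}`. -/
def VSet (κ lam : Cardinal) : Set (Amb κ lam) :=
  {p ∈ ASet κ lam | chiO κ.ord p.1 = chiO lam.ord p.2.1}

/-- `P*_{κ,λ} = {⟨x0,x1,x2⟩ ∈ A_{κ,λ} : χ_κ(x0) = 0 or x1 ∪ x2 ≠ ∅}`. -/
def PstarSet (κ lam : Cardinal) : Set (Amb κ lam) :=
  {p ∈ ASet κ lam | chiO κ.ord p.1 = false ∨ p.2.1 ∪ p.2.2 ≠ ∅}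

/-- `P_{κ,λ} = {⟨x0,x1,x2⟩ ∈ A_{κ,λ} : χ_κ(x0) = χ_λ(x1) ∨ χ_λ(x2)}`. -/
def PkSet (κ lam : Cardinal) : Set (Amb κ lam) :=
  {p ∈ ASet κ lam | chiO κ.ord p.1 = chiO lam.ord p.2.1 ⊔ chiO lam.ord p.2.2}

open Classical in
/-- The map `σ = σ_{⃗a,⃗b} : P*_{κ,λ} → S` : `σ(⟨x0,x1,x2⟩) = a_{sup x0}` if
`x1 ∪ x2 = ∅` (in which case `x0` is bounded, so `sup x0 < κ`), and
`σ(⟨x0,x1,x2⟩) = b_{min (x1 ∪ x2)}` otherwise.  (Outside of `P*_{κ,λ}` the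
value of this function is irrelevant; junk value `⊥` is used when the
corresponding index is out of range.) -/
noncomputable def sigmaM (κ lam : Cardinal) {S : Type*} [SemilatticeSup S] [OrderBot S]
    (a : ↥(Set.Iio κ.ord) → S) (b : ↥(Set.Iio lam.ord) → S) (p : Amb κ lam) : S :=
  if p.2.1 ∪ p.2.2 = ∅ then
    if h : sSup (Subtype.val '' p.1) < κ.ord then a ⟨sSup (Subtype.val '' p.1), h⟩ else ⊥
  else
    if h : sInf (Subtype.val '' (p.2.1 ∪ p.2.2)) < lam.ord then
      b ⟨sInf (Subtype.val '' (p.2.1 ∪ p.2.2)), h⟩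
    else ⊥

/-- The measure `μ = μ_{⃗a,⃗b}` on `P_{κ,λ}` : `μ(x, y) = σ(x \ y)`. -/
noncomputable def muM (κ lam : Cardinal) {S : Type*} [SemilatticeSup S] [OrderBot S]
    (a : ↥(Set.Iio κ.ord) → S) (b : ↥(Set.Iio lam.ord) → S) (p q : Amb κ lam) : S :=
  sigmaM κ lam a b (p \ q)


abbrev TT : Type _ := ↥(Set.Iio (ℵ₀ : Cardinal).ord)

def natT (n : ℕ) : TT := ⟨(n : Ordinal), by
  simp only [Set.mem_Iio, Cardinal.ord_aleph0]; exact Ordinal.nat_lt_omega0 n⟩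

lemma tt_lt (t : TT) : (t : Ordinal) < Ordinal.omega0 := by
  rw [← Cardinal.ord_aleph0]; exact t.2

noncomputable def toN (t : TT) : ℕ := (Ordinal.lt_omega0.mp (tt_lt t)).choose

lemma natT_toN (t : TT) : natT (toN t) = t := by
  apply Subtype.ext
  exact (Ordinal.lt_omega0.mp (tt_lt t)).choose_spec.symm

lemma natT_inj : Function.Injective natT := by
  intro m n h
  have : (m : Ordinal) = n := congrArg Subtype.val h
  exact_mod_cast this

lemma toN_natT (n : ℕ) : toN (natT n) = n := natT_inj (natT_toN (natT n))

lemma natT_le_natT {m n : ℕ} : natT m ≤ natT n ↔ m ≤ n := by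
  rw [← Subtype.coe_le_coe]; exact Nat.cast_le

lemma natT_lt_natT {m n : ℕ} : natT m < natT n ↔ m < n := by
  rw [← Subtype.coe_lt_coe]; exact Nat.cast_lt

def nset (s : Set TT) : Set ℕ := {n | natT n ∈ s}

@[simp] lemma mem_nset {n : ℕ} {s : Set TT} : n ∈ nset s ↔ natT n ∈ s := Iff.rfl

lemma nset_empty : nset (∅ : Set TT) = ∅ := rfl
lemma nset_eq_empty {s : Set TT} : nset s = ∅ ↔ s = ∅ := by
  constructor
  · intro h; ext t; simp only [mem_empty_iff_false, iff_false]
    intro ht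
    have : toN t ∈ nset s := by simp [natT_toN t, ht]
    simp [h] at this
  · rintro rfl; rfl

lemma nset_mono {s t : Set TT} (h : s ⊆ t) : nset s ⊆ nset t := fun n hn => h hn

lemma chi_eq_false_iff (s : Set TT) :
    chiO (ℵ₀ : Cardinal).ord s = false ↔ BddAbove (nset s) := by
  unfold chiO
  split_ifs with h
  · simp only [true_iff]
    obtain ⟨α, hα, hbd⟩ := h
    rw [Cardinal.ord_aleph0, Ordinal.lt_omega0] at hα
    obtain ⟨k, rfl⟩ := hα
    refine ⟨k, fun n hn => ?_⟩
    have := hbd (natT n) hn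
    have : (n : Ordinal) < (k : Ordinal) := this
    exact le_of_lt (by exact_mod_cast this)
  · simp only [false_iff]
    intro ⟨N, hN⟩
    apply h
    refine ⟨((N+1 : ℕ) : Ordinal), by rw [Cardinal.ord_aleph0]; exact Ordinal.nat_lt_omega0 _, ?_⟩
    intro β hβ
    have h1 : toN β ∈ nset s := by simp [natT_toN β, hβ]
    have h2 : toN β ≤ N := hN h1
    have h3 : (β : Ordinal) = (toN β : ℕ) := congrArg Subtype.val (natT_toN β).symm
    rw [h3]
    exact_mod_cast Nat.lt_succ_of_le h2

lemma chi_eq_true_iff (s : Set TT) :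
    chiO (ℵ₀ : Cardinal).ord s = true ↔ ¬ BddAbove (nset s) := by
  rw [← chi_eq_false_iff]; cases chiO (ℵ₀ : Cardinal).ord s <;> simp

lemma int_bdd_or (s : Set TT) (h : s ∈ IntP TT) :
    BddAbove (nset s) ∨ BddAbove (nset sᶜ) := by
  induction h with
  | lower s hs =>
    by_cases hu : s = Set.univ
    · right; subst hu; rw [compl_univ, nset_empty]; exact bddAbove_empty
    · left
      obtain ⟨t, ht⟩ : ∃ t, t ∉ s := by
        by_contra hc; push_neg at hc; exact hu (eq_univ_of_forall hc)
      refine ⟨toN t, fun n hn => ?_⟩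
      have hlt : natT n < t := by
        by_contra hle
        exact ht (hs (le_of_not_gt hle) hn)
      have : natT n < natT (toN t) := by rwa [natT_toN]
      exact le_of_lt (natT_lt_natT.mp this)
  | compl s _ ih =>
    rw [compl_compl]
    exact ih.symm
  | union s t _ _ ihs iht =>
    rcases ihs with hs | hs
    · rcases iht with ht | ht
      · left
        have : nset (s ∪ t) = nset s ∪ nset t := rfl
        rw [this]; exact hs.union ht
      · right
        refine ht.mono (nset_mono ?_)
        rw [compl_union]; exact inter_subset_right
    · right
      refine hs.mono (nset_mono ?_)
      rw [compl_union]; exact inter_subset_left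

section SigA
variable {S : Type*} [SemilatticeSup S] [OrderBot S] (a b : ℕ → S)

open Classical in
noncomputable def sigA (s t : Set ℕ) : S :=
  if t.Nonempty then b (sInf t) else if s.Nonempty then a (sSup s) else ⊥

def GoodA (s t : Set ℕ) : Prop := t = ∅ → BddAbove s

lemma goodA_union {s s' t t' : Set ℕ} (h : GoodA s t) (h' : GoodA s' t') :
    GoodA (s ∪ s') (t ∪ t') := by
  intro he
  rw [union_empty_iff] at he
  exact (h he.1).union (h' he.2)

variable (hab : ∀ m n : ℕ, a m ≤ b n) (ha : Monotone a) (hb : Antitone b)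

lemma sigA_empty : sigA a b ∅ ∅ = ⊥ := by simp [sigA]

include hab ha hb in
lemma sigA_mono {s s' t t' : Set ℕ} (hs : s ⊆ s') (ht : t ⊆ t') (hg : GoodA s' t') :
    sigA a b s t ≤ sigA a b s' t' := by
  simp only [sigA]
  by_cases ht' : t'.Nonempty
  · rw [if_pos ht']
    by_cases htn : t.Nonempty
    · rw [if_pos htn]
      exact hb (Nat.sInf_le (ht (Nat.sInf_mem htn)))
    · rw [if_neg htn]
      split_ifs
      · exact hab _ _
      · exact bot_le
  · have htn : ¬ t.Nonempty := fun h => ht' (h.mono ht)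
    rw [if_neg htn, if_neg ht']
    by_cases hsn : s.Nonempty
    · rw [if_pos hsn, if_pos (hsn.mono hs)]
      exact ha (csSup_le_csSup (hg (not_nonempty_iff_eq_empty.mp ht')) hsn hs)
    · rw [if_neg hsn]; exact bot_le

include hab ha hb in
lemma sigA_union {s s' t t' : Set ℕ} (hg : GoodA s t) (hg' : GoodA s' t') :
    sigA a b (s ∪ s') (t ∪ t') = sigA a b s t ⊔ sigA a b s' t' := by
  apply le_antisymm
  · simp only [sigA]
    by_cases ht : t.Nonempty
    · have htu : (t ∪ t').Nonempty := ht.mono subset_union_left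
      rw [if_pos htu]
      have hmem := Nat.sInf_mem htu
      rcases hmem with hm | hm
      · refine le_sup_of_le_left ?_
        rw [if_pos ht]
        exact hb (Nat.sInf_le hm)
      · have ht' : t'.Nonempty := ⟨_, hm⟩
        refine le_sup_of_le_right ?_
        rw [if_pos ht']
        exact hb (Nat.sInf_le hm)
    · by_cases ht' : t'.Nonempty
      · have htu : (t ∪ t').Nonempty := ht'.mono subset_union_right
        rw [if_pos htu]
        have hmem := Nat.sInf_mem htu
        rcases hmem with hm | hm
        · exact absurd ⟨_, hm⟩ ht
        · refine le_sup_of_le_right ?_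
          rw [if_pos ht']
          exact hb (Nat.sInf_le hm)
      · have hte : t = ∅ := not_nonempty_iff_eq_empty.mp ht
        have hte' : t' = ∅ := not_nonempty_iff_eq_empty.mp ht'
        have htu : ¬ (t ∪ t').Nonempty := by simp [hte, hte']
        rw [if_neg htu]
        by_cases hsu : (s ∪ s').Nonempty
        · rw [if_pos hsu]
          by_cases hs : s.Nonempty
          · by_cases hs' : s'.Nonempty
            · rw [csSup_union (hg hte) hs (hg' hte') hs']
              rcases le_total (sSup s) (sSup s') with h | h
              · rw [sup_eq_right.mpr h]
                refine le_sup_of_le_right ?_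
                rw [if_neg ht', if_pos hs']
              · rw [sup_eq_left.mpr h]
                refine le_sup_of_le_left ?_
                rw [if_neg ht, if_pos hs]
            · rw [not_nonempty_iff_eq_empty.mp hs', union_empty]
              refine le_sup_of_le_left ?_
              rw [if_neg ht, if_pos hs]
          · rw [not_nonempty_iff_eq_empty.mp hs, empty_union] at hsu ⊢
            refine le_sup_of_le_right ?_
            rw [if_neg ht', if_pos hsu]
        · rw [if_neg hsu]; exact bot_le
  · exact sup_le
      (sigA_mono a b hab ha hb subset_union_left subset_union_left (goodA_union hg hg'))
      (sigA_mono a b hab ha hb subset_union_right subset_union_right (goodA_union hg hg'))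

lemma goodA_finsup {ι : Type*} (F : Finset ι) (g h : ι → Set ℕ)
    (hgh : ∀ i ∈ F, GoodA (g i) (h i)) : GoodA (F.sup g) (F.sup h) := by
  induction F using Finset.cons_induction with
  | empty => intro _; simpa using bddAbove_empty
  | cons i F hi ih =>
    rw [Finset.sup_cons, Finset.sup_cons]
    exact goodA_union (hgh i (Finset.mem_cons_self i F))
      (ih fun j hj => hgh j (Finset.mem_cons_of_mem hj))

include hab ha hb in
lemma sigA_finsup {ι : Type*} {F : Finset ι} (hF : F.Nonempty) (g h : ι → Set ℕ)
    (hgh : ∀ i ∈ F, GoodA (g i) (h i)) :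
    sigA a b (F.sup g) (F.sup h) = F.sup fun i => sigA a b (g i) (h i) := by
  induction hF using Finset.Nonempty.cons_induction with
  | singleton i => simp
  | cons i F hi hF ih =>
    rw [Finset.sup_cons, Finset.sup_cons, Finset.sup_cons]
    simp only [Set.sup_eq_union]
    rw [sigA_union a b hab ha hb (hgh i (Finset.mem_cons_self i F))
        (goodA_finsup F g h fun j hj => hgh j (Finset.mem_cons_of_mem hj)),
      ih fun j hj => hgh j (Finset.mem_cons_of_mem hj)]
end SigA


section Meat
variable {S : Type*} [SemilatticeSup S] [OrderBot S]

def DD (x q : Amb ℵ₀ ℵ₀) : Set ℕ × Set ℕ :=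
  (nset (x.1 \ q.1), nset (x.2.1 \ q.2.1) ∪ nset (x.2.2 \ q.2.2))

noncomputable def muA (a b : ℕ → S) (x q : Amb ℵ₀ ℵ₀) : S :=
  sigA a b (DD x q).1 (DD x q).2

lemma sup_fst (x y : Amb ℵ₀ ℵ₀) : (x ⊔ y).1 = x.1 ∪ y.1 := rfl
lemma sup_snd1 (x y : Amb ℵ₀ ℵ₀) : (x ⊔ y).2.1 = x.2.1 ∪ y.2.1 := rfl
lemma sup_snd2 (x y : Amb ℵ₀ ℵ₀) : (x ⊔ y).2.2 = x.2.2 ∪ y.2.2 := rfl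
lemma inf_fst (x y : Amb ℵ₀ ℵ₀) : (x ⊓ y).1 = x.1 ∩ y.1 := rfl
lemma inf_snd1 (x y : Amb ℵ₀ ℵ₀) : (x ⊓ y).2.1 = x.2.1 ∩ y.2.1 := rfl
lemma inf_snd2 (x y : Amb ℵ₀ ℵ₀) : (x ⊓ y).2.2 = x.2.2 ∩ y.2.2 := rfl
lemma bot_fst : (⊥ : Amb ℵ₀ ℵ₀).1 = ∅ := rfl
lemma bot_snd1 : (⊥ : Amb ℵ₀ ℵ₀).2.1 = ∅ := rfl
lemma bot_snd2 : (⊥ : Amb ℵ₀ ℵ₀).2.2 = ∅ := rfl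
lemma top_fst : (⊤ : Amb ℵ₀ ℵ₀).1 = Set.univ := rfl
lemma top_snd1 : (⊤ : Amb ℵ₀ ℵ₀).2.1 = Set.univ := rfl
lemma top_snd2 : (⊤ : Amb ℵ₀ ℵ₀).2.2 = Set.univ := rfl

lemma nset_union (s t : Set TT) : nset (s ∪ t) = nset s ∪ nset t := rfl

lemma goodA_DD {x q : Amb ℵ₀ ℵ₀} (hx : x ∈ PkSet ℵ₀ ℵ₀) (hq : q ∈ PkSet ℵ₀ ℵ₀) :
    GoodA (DD x q).1 (DD x q).2 := by
  intro he
  have h12 := union_empty_iff.mp he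
  have hs1 : x.2.1 ⊆ q.2.1 := diff_eq_empty.mp (nset_eq_empty.mp h12.1)
  have hs2 : x.2.2 ⊆ q.2.2 := diff_eq_empty.mp (nset_eq_empty.mp h12.2)
  by_cases hc : chiO (ℵ₀ : Cardinal).ord x.1 = false
  · exact ((chi_eq_false_iff _).mp hc).mono (nset_mono diff_subset)
  · have hct : chiO (ℵ₀ : Cardinal).ord x.1 = true := by
      cases h : chiO (ℵ₀ : Cardinal).ord x.1
      · exact absurd h hc
      · rfl
    have hor : chiO (ℵ₀ : Cardinal).ord x.2.1 = true ∨
        chiO (ℵ₀ : Cardinal).ord x.2.2 = true := by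
      have := hx.2
      rw [hct] at this
      exact Bool.or_eq_true _ _ |>.mp this.symm
    have key : ∀ (u v : Set TT), u ⊆ v → v ∈ IntP TT →
        chiO (ℵ₀ : Cardinal).ord u = true →
        (chiO (ℵ₀ : Cardinal).ord v = true) := by
      intro u v huv _ hu
      apply (chi_eq_true_iff _).mpr
      intro hbdd
      exact (chi_eq_true_iff _).mp hu (hbdd.mono (nset_mono huv))
    have hq0 : chiO (ℵ₀ : Cardinal).ord q.1 = true := by
      rcases hor with h | h
      · have := key _ _ hs1 hq.1.2.1 h
        rw [hq.2, this]
        cases chiO (ℵ₀ : Cardinal).ord q.2.2 <;> rfl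
      · have := key _ _ hs2 hq.1.2.2 h
        rw [hq.2, this]
        cases chiO (ℵ₀ : Cardinal).ord q.2.1 <;> rfl
    have hnb : ¬ BddAbove (nset q.1) := (chi_eq_true_iff _).mp hq0
    rcases int_bdd_or q.1 hq.1.1 with h | h
    · exact absurd h hnb
    · exact h.mono (nset_mono fun u hu => hu.2)

lemma DD_sup1 (x y q : Amb ℵ₀ ℵ₀) : (DD (x ⊔ y) q).1 = (DD x q).1 ∪ (DD y q).1 := by
  simp only [DD, sup_fst]
  ext n; simp only [mem_union, mem_nset, mem_diff]; tauto

lemma DD_sup2 (x y q : Amb ℵ₀ ℵ₀) : (DD (x ⊔ y) q).2 = (DD x q).2 ∪ (DD y q).2 := by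
  simp only [DD, sup_snd1, sup_snd2]
  ext n; simp only [mem_union, mem_nset, mem_diff]; tauto

lemma DD_inf1 (p y z : Amb ℵ₀ ℵ₀) : (DD p (y ⊓ z)).1 = (DD p y).1 ∪ (DD p z).1 := by
  simp only [DD, inf_fst]
  ext n; simp only [mem_union, mem_nset, mem_diff, mem_inter_iff]; tauto

lemma DD_inf2 (p y z : Amb ℵ₀ ℵ₀) : (DD p (y ⊓ z)).2 = (DD p y).2 ∪ (DD p z).2 := by
  simp only [DD, inf_snd1, inf_snd2]
  ext n; simp only [mem_union, mem_nset, mem_diff, mem_inter_iff]; tauto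

lemma DD_tri1 (x y z : Amb ℵ₀ ℵ₀) : (DD x z).1 ⊆ (DD x y).1 ∪ (DD y z).1 := by
  intro n; simp only [DD, mem_union, mem_nset, mem_diff]; tauto

lemma DD_tri2 (x y z : Amb ℵ₀ ℵ₀) : (DD x z).2 ⊆ (DD x y).2 ∪ (DD y z).2 := by
  intro n; simp only [DD, mem_union, mem_nset, mem_diff]; tauto

lemma DD_finsup1 (X : Finset (Amb ℵ₀ ℵ₀)) (q : Amb ℵ₀ ℵ₀) :
    (DD (X.sup id) q).1 = X.sup fun x => (DD x q).1 := by
  induction X using Finset.cons_induction with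
  | empty => simp [DD, bot_fst, nset_empty]
  | cons x X hx ih =>
    rw [Finset.sup_cons, Finset.sup_cons, id_eq, DD_sup1, ih]; rfl

lemma DD_finsup2 (X : Finset (Amb ℵ₀ ℵ₀)) (q : Amb ℵ₀ ℵ₀) :
    (DD (X.sup id) q).2 = X.sup fun x => (DD x q).2 := by
  induction X using Finset.cons_induction with
  | empty => simp [DD, bot_snd1, bot_snd2, nset_empty]
  | cons x X hx ih =>
    rw [Finset.sup_cons, Finset.sup_cons, id_eq, DD_sup2, ih]; rfl

lemma DD_fininf1 (Y : Finset (Amb ℵ₀ ℵ₀)) (p : Amb ℵ₀ ℵ₀) :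
    (DD p (Y.inf id)).1 = Y.sup fun y => (DD p y).1 := by
  induction Y using Finset.cons_induction with
  | empty => simp [DD, top_fst, nset_eq_empty]
  | cons y Y hy ih =>
    rw [Finset.inf_cons, Finset.sup_cons, id_eq, DD_inf1, ih]; rfl

lemma DD_fininf2 (Y : Finset (Amb ℵ₀ ℵ₀)) (p : Amb ℵ₀ ℵ₀) :
    (DD p (Y.inf id)).2 = Y.sup fun y => (DD p y).2 := by
  induction Y using Finset.cons_induction with
  | empty => simp [DD, top_snd1, top_snd2, nset_eq_empty]
  | cons y Y hy ih =>
    rw [Finset.inf_cons, Finset.sup_cons, id_eq, DD_inf2, ih]; rfl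

variable (a b : ℕ → S) (hab : ∀ m n : ℕ, a m ≤ b n) (ha : Monotone a) (hb : Antitone b)

lemma muA_of_le {x q : Amb ℵ₀ ℵ₀} (h : x ≤ q) : muA a b x q = ⊥ := by
  have h1 : x.1 \ q.1 = ∅ := diff_eq_empty.mpr h.1
  have h2 : x.2.1 \ q.2.1 = ∅ := diff_eq_empty.mpr h.2.1
  have h3 : x.2.2 \ q.2.2 = ∅ := diff_eq_empty.mpr h.2.2
  rw [muA]
  simp only [DD, h1, h2, h3, nset_empty, union_empty]
  exact sigA_empty a b

include hab ha hb in
lemma muA_tri {x y z : Amb ℵ₀ ℵ₀} (hx : x ∈ PkSet ℵ₀ ℵ₀) (hy : y ∈ PkSet ℵ₀ ℵ₀)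
    (hz : z ∈ PkSet ℵ₀ ℵ₀) : muA a b x z ≤ muA a b x y ⊔ muA a b y z := by
  have g1 := goodA_DD hx hy
  have g2 := goodA_DD hy hz
  calc muA a b x z
      ≤ sigA a b ((DD x y).1 ∪ (DD y z).1) ((DD x y).2 ∪ (DD y z).2) :=
        sigA_mono a b hab ha hb (DD_tri1 x y z) (DD_tri2 x y z) (goodA_union g1 g2)
    _ = muA a b x y ⊔ muA a b y z := sigA_union a b hab ha hb g1 g2

include hab ha hb in
lemma muA_sup (X : Finset (Amb ℵ₀ ℵ₀)) (hX : X.Nonempty) (hXP : ↑X ⊆ PkSet ℵ₀ ℵ₀)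
    {q : Amb ℵ₀ ℵ₀} (hq : q ∈ PkSet ℵ₀ ℵ₀) :
    muA a b (X.sup id) q = X.sup fun x => muA a b x q := by
  rw [muA, DD_finsup1, DD_finsup2]
  exact sigA_finsup a b hab ha hb hX _ _ fun i hi => goodA_DD (hXP hi) hq

include hab ha hb in
lemma muA_inf (Y : Finset (Amb ℵ₀ ℵ₀)) (hY : Y.Nonempty) (hYP : ↑Y ⊆ PkSet ℵ₀ ℵ₀)
    {p : Amb ℵ₀ ℵ₀} (hp : p ∈ PkSet ℵ₀ ℵ₀) :
    muA a b p (Y.inf id) = Y.sup fun y => muA a b p y := by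
  rw [muA, DD_fininf1, DD_fininf2]
  exact sigA_finsup a b hab ha hb hY _ _ fun i hi => goodA_DD hp (hYP hi)

/-! Special elements -/

def botE : Amb ℵ₀ ℵ₀ := (∅, ∅, ∅)
def eE : Amb ℵ₀ ℵ₀ := (Set.univ, Set.univ, ∅)
def eE' : Amb ℵ₀ ℵ₀ := (Set.univ, ∅, Set.univ)
def tmE (m : ℕ) : Amb ℵ₀ ℵ₀ := (Set.Iic (natT m), ∅, ∅)
def ynE (n : ℕ) : Amb ℵ₀ ℵ₀ := (Set.univ, Set.Iio (natT n), Set.Ici (natT n))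
def znE (n : ℕ) : Amb ℵ₀ ℵ₀ := (∅, ∅, Set.Iio (natT n))

lemma chi_empty : chiO (ℵ₀ : Cardinal).ord (∅ : Set TT) = false :=
  (chi_eq_false_iff _).mpr (by rw [nset_empty]; exact bddAbove_empty)

lemma chi_univ : chiO (ℵ₀ : Cardinal).ord (Set.univ : Set TT) = true := by
  apply (chi_eq_true_iff _).mpr
  rintro ⟨N, hN⟩
  have : N + 1 ≤ N := hN (by simp [nset])
  omega

lemma chi_Iic (m : ℕ) : chiO (ℵ₀ : Cardinal).ord (Set.Iic (natT m)) = false := by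
  apply (chi_eq_false_iff _).mpr
  refine ⟨m, fun n hn => ?_⟩
  exact natT_le_natT.mp hn

lemma chi_Iio (n : ℕ) : chiO (ℵ₀ : Cardinal).ord (Set.Iio (natT n)) = false := by
  apply (chi_eq_false_iff _).mpr
  refine ⟨n, fun k hk => ?_⟩
  exact le_of_lt (natT_lt_natT.mp hk)

lemma chi_Ici (n : ℕ) :
    chiO (ℵ₀ : Cardinal).ord (Set.Ici (natT n) : Set TT) = true := by
  apply (chi_eq_true_iff _).mpr
  rintro ⟨N, hN⟩
  have hmem : max n (N + 1) ∈ nset (Set.Ici (natT n)) := by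
    simp only [mem_nset, mem_Ici]
    exact natT_le_natT.mpr (le_max_left _ _)
  have := hN hmem
  omega

lemma int_univ : (Set.univ : Set TT) ∈ IntP TT := IntMem.lower _ (isLowerSet_univ )
lemma int_empty : (∅ : Set TT) ∈ IntP TT := IntMem.lower _ (isLowerSet_empty )
lemma int_Iic (m : ℕ) : (Set.Iic (natT m)) ∈ IntP TT := IntMem.lower _ (isLowerSet_Iic _)
lemma int_Iio (n : ℕ) : (Set.Iio (natT n)) ∈ IntP TT := IntMem.lower _ (isLowerSet_Iio _)
lemma int_Ici (n : ℕ) : (Set.Ici (natT n) : Set TT) ∈ IntP TT := by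
  rw [← compl_Iio]; exact IntMem.compl _ (int_Iio n)

lemma botE_mem : botE ∈ PkSet ℵ₀ ℵ₀ :=
  ⟨⟨int_empty, int_empty, int_empty⟩, by simp only [botE]; simp [chi_empty]⟩

lemma eE_mem : eE ∈ PkSet ℵ₀ ℵ₀ :=
  ⟨⟨int_univ, int_univ, int_empty⟩, by
    simp only [eE]; simp [chi_univ, chi_empty]⟩

lemma eE'_mem : eE' ∈ PkSet ℵ₀ ℵ₀ :=
  ⟨⟨int_univ, int_empty, int_univ⟩, by
    simp only [eE']; simp [chi_univ, chi_empty]⟩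

lemma tmE_mem (m : ℕ) : tmE m ∈ PkSet ℵ₀ ℵ₀ :=
  ⟨⟨int_Iic m, int_empty, int_empty⟩, by
    simp only [tmE]; simp [chi_Iic, chi_empty]⟩

lemma ynE_mem (n : ℕ) : ynE n ∈ PkSet ℵ₀ ℵ₀ :=
  ⟨⟨int_univ, int_Iio n, int_Ici n⟩, by
    simp only [ynE]; simp [chi_univ, chi_Iio, chi_Ici]⟩

lemma znE_mem (n : ℕ) : znE n ∈ PkSet ℵ₀ ℵ₀ :=
  ⟨⟨int_empty, int_empty, int_Iio n⟩, by
    simp only [znE]; simp [chi_empty, chi_Iio]⟩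

lemma tmE_le_eE (m : ℕ) : tmE m ≤ eE := by
  refine ⟨?_, ?_, ?_⟩ <;> simp [tmE, eE]

lemma tmE_le_eE' (m : ℕ) : tmE m ≤ eE' := by
  refine ⟨?_, ?_, ?_⟩ <;> simp [tmE, eE']

lemma yn_inf_zn (n : ℕ) : ynE n ⊓ znE n = botE := by
  refine Prod.ext ?_ (Prod.ext ?_ ?_)
  · rw [inf_fst]; simp [ynE, znE, botE]
  · rw [inf_snd1]; simp [ynE, znE, botE]
  · rw [inf_snd2]; simp [ynE, znE, botE, Set.Ici_inter_Iio]

lemma nset_Iic (m : ℕ) : nset (Set.Iic (natT m)) = Set.Iic m := by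
  ext n; simp [nset, natT_le_natT]

lemma nset_Ici (n : ℕ) : nset (Set.Ici (natT n)) = Set.Ici n := by
  ext k; simp [nset, natT_le_natT]

lemma muA_tm (m : ℕ) : muA a b (tmE m) botE = a m := by
  rw [muA]
  have h1 : (DD (tmE m) botE).1 = Set.Iic m := by
    simp only [DD, tmE, botE, diff_empty]; exact nset_Iic m
  have h2 : (DD (tmE m) botE).2 = (∅ : Set ℕ) := by
    simp only [DD, tmE, botE, diff_empty, nset_empty, union_empty]
  rw [h1, h2, sigA, if_neg (by simp), if_pos ⟨m, le_refl m⟩, csSup_Iic]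

lemma muA_e_yn (n : ℕ) : muA a b eE (ynE n) = b n := by
  rw [muA]
  have h2 : (DD eE (ynE n)).2 = Set.Ici n := by
    simp only [DD, eE, ynE, empty_diff, nset_empty, union_empty]
    rw [← compl_eq_univ_diff, compl_Iio]
    exact nset_Ici n
  rw [h2, sigA, if_pos ⟨n, le_refl n⟩, csInf_Ici]

lemma muA_e'_zn (n : ℕ) : muA a b eE' (znE n) = b n := by
  rw [muA]
  have h2 : (DD eE' (znE n)).2 = Set.Ici n := by
    simp only [DD, eE', znE, empty_diff, nset_empty, empty_union]
    rw [← compl_eq_univ_diff, compl_Iio]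
    exact nset_Ici n
  rw [h2, sigA, if_pos ⟨n, le_refl n⟩, csInf_Ici]

end Meat

/-- Let `S` be a `⟨∨,0⟩`-semilattice that fails the
`⟨ω,ω⟩`-interpolation property, as witnessed by an increasing sequence `(a_n)` and a
decreasing sequence `(b_n)` with `a_m ≤ b_n` for all `m, n` but no interpolant.  Then there
is an `S`-valued measure `μ` on the partial lattice `P_{ω,ω}` that cannot be factored
through any lattice: there are no lattice `L`, homomorphism of partial lattices
`f : P_{ω,ω} → L` and `S`-valued measure `ν` on `L` with `μ(x,y) = ν(f x, f y)` on
`P_{ω,ω}`. -/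
theorem exists_measure_not_factoring.{u} {S : Type*} [SemilatticeSup S] [OrderBot S]
    (a b : ℕ → S) (ha : Monotone a) (hb : Antitone b)
    (hab : ∀ m n : ℕ, a m ≤ b n)
    (hni : ¬∃ c : S, (∀ m, a m ≤ c) ∧ ∀ n, c ≤ b n) :
    ∃ μ : Amb ℵ₀ ℵ₀ → Amb ℵ₀ ℵ₀ → S,
      -- μ is an S-valued measure on the partial lattice P_{ω,ω} :
      ((∀ x ∈ PkSet ℵ₀ ℵ₀, ∀ y ∈ PkSet ℵ₀ ℵ₀, x ≤ y → μ x y = ⊥) ∧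
       (∀ x ∈ PkSet ℵ₀ ℵ₀, ∀ y ∈ PkSet ℵ₀ ℵ₀, ∀ z ∈ PkSet ℵ₀ ℵ₀,
          μ x z ≤ μ x y ⊔ μ y z) ∧
       (∀ X : Finset (Amb ℵ₀ ℵ₀), X.Nonempty → ↑X ⊆ PkSet ℵ₀ ℵ₀ →
          X.sup id ∈ PkSet ℵ₀ ℵ₀ → ∀ q ∈ PkSet ℵ₀ ℵ₀,
          μ (X.sup id) q = X.sup fun x => μ x q) ∧
       (∀ Y : Finset (Amb ℵ₀ ℵ₀), Y.Nonempty → ↑Y ⊆ PkSet ℵ₀ ℵ₀ →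
          Y.inf id ∈ PkSet ℵ₀ ℵ₀ → ∀ p ∈ PkSet ℵ₀ ℵ₀,
          μ p (Y.inf id) = Y.sup fun y => μ p y)) ∧
      -- and μ cannot be factored through a lattice :
      ∀ (L : Type u) [Lattice L], ∀ f : Amb ℵ₀ ℵ₀ → L,
        (∀ x ∈ PkSet ℵ₀ ℵ₀, ∀ y ∈ PkSet ℵ₀ ℵ₀, x ≤ y → f x ≤ f y) →
        (∀ X : Finset (Amb ℵ₀ ℵ₀), ∀ hX : X.Nonempty, ↑X ⊆ PkSet ℵ₀ ℵ₀ →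
          X.sup id ∈ PkSet ℵ₀ ℵ₀ → f (X.sup id) = X.sup' hX f) →
        (∀ Y : Finset (Amb ℵ₀ ℵ₀), ∀ hY : Y.Nonempty, ↑Y ⊆ PkSet ℵ₀ ℵ₀ →
          Y.inf id ∈ PkSet ℵ₀ ℵ₀ → f (Y.inf id) = Y.inf' hY f) →
        ∀ ν : L → L → S,
        (∀ x y : L, x ≤ y → ν x y = ⊥) →
        (∀ x y z : L, ν x z ≤ ν x y ⊔ ν y z) →
        (∀ x y z : L, ν (x ⊔ y) z = ν x z ⊔ ν y z) →
        (∀ x y z : L, ν x (y ⊓ z) = ν x y ⊔ ν x z) →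
        ¬∀ x ∈ PkSet ℵ₀ ℵ₀, ∀ y ∈ PkSet ℵ₀ ℵ₀, μ x y = ν (f x) (f y) := by
  classical
  refine ⟨muA a b, ⟨?_, ?_, ?_, ?_⟩, ?_⟩
  · intro x _ y _ hxy
    exact muA_of_le a b hxy
  · intro x hx y hy z hz
    exact muA_tri a b hab ha hb hx hy hz
  · intro X hX hXP _ q hq
    exact muA_sup a b hab ha hb X hX hXP hq
  · intro Y hY hYP hYinf p hp
    exact muA_inf a b hab ha hb Y hY hYP hp
  · intro L _ f hf hfsup hfinf ν hν1 hν2 hν3 hν4 H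
    apply hni
    set g := f eE ⊓ f eE' with hg
    refine ⟨ν g (f botE), fun m => ?_, fun n => ?_⟩
    · -- a m ≤ c
      have h1 : f (tmE m) ≤ g :=
        le_inf (hf _ (tmE_mem m) _ eE_mem (tmE_le_eE m))
          (hf _ (tmE_mem m) _ eE'_mem (tmE_le_eE' m))
      have h2 : a m = ν (f (tmE m)) (f botE) := by
        rw [← H _ (tmE_mem m) _ botE_mem, muA_tm]
      rw [h2]
      calc ν (f (tmE m)) (f botE)
          ≤ ν (f (tmE m)) g ⊔ ν g (f botE) := hν2 _ _ _
        _ = ν g (f botE) := by rw [hν1 _ _ h1, bot_sup_eq]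
    · -- c ≤ b n
      have hfb : f botE = f (ynE n) ⊓ f (znE n) := by
        have hinf : (insert (ynE n) {znE n} : Finset (Amb ℵ₀ ℵ₀)).inf id = botE := by
          rw [Finset.inf_insert, Finset.inf_singleton, id_eq, id_eq, yn_inf_zn]
        have hsub : ↑(insert (ynE n) {znE n} : Finset (Amb ℵ₀ ℵ₀)) ⊆ PkSet ℵ₀ ℵ₀ := by
          intro u hu
          simp only [Finset.coe_insert, Finset.coe_singleton, mem_insert_iff,
            mem_singleton_iff] at hu
          rcases hu with rfl | rfl
          · exact ynE_mem n
          · exact znE_mem n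
        have := hfinf (insert (ynE n) {znE n}) ⟨ynE n, by simp⟩ hsub
          (by rw [hinf]; exact botE_mem)
        rw [hinf] at this
        rw [this, Finset.inf'_insert, Finset.inf'_singleton]
        exact Finset.singleton_nonempty _
      have step1 : ν g (f (ynE n)) ≤ ν (f eE) (f (ynE n)) := by
        calc ν g (f (ynE n)) ≤ ν g (f eE) ⊔ ν (f eE) (f (ynE n)) := hν2 _ _ _
          _ = ν (f eE) (f (ynE n)) := by rw [hν1 _ _ inf_le_left, bot_sup_eq]
      have step2 : ν g (f (znE n)) ≤ ν (f eE') (f (znE n)) := by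
        calc ν g (f (znE n)) ≤ ν g (f eE') ⊔ ν (f eE') (f (znE n)) := hν2 _ _ _
          _ = ν (f eE') (f (znE n)) := by rw [hν1 _ _ inf_le_right, bot_sup_eq]
      calc ν g (f botE) = ν g (f (ynE n) ⊓ f (znE n)) := by rw [hfb]
        _ = ν g (f (ynE n)) ⊔ ν g (f (znE n)) := hν4 _ _ _
        _ ≤ ν (f eE) (f (ynE n)) ⊔ ν (f eE') (f (znE n)) := sup_le_sup step1 step2
        _ = muA a b eE (ynE n) ⊔ muA a b eE' (znE n) := by
            rw [H _ eE_mem _ (ynE_mem n), H _ eE'_mem _ (znE_mem n)]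
        _ = b n := by rw [muA_e_yn, muA_e'_zn, sup_idem]
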